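/- Let Z = X + i f(Y) where X, Y are independent standard one-dimensional Brownian motions and f is the 2-periodic seesaw (tent) function with values in [0,1]. Then for every bounded Borel function φ on the strip {z : 0 ≤ Im z ≤ 1}, every x ∈ ℝ, and every t ≥ 0, E[φ(X_t^x + iU)] = E[E_{x+iU}[φ(Z_t)]], where U is uniform on [0,1] independent of everything; i.e. the semigroup of Z is intertwined with that of one-dimensional Brownian motion by the kernel Λ(x,·) = Unif([x, x+i]). -/

import Mathlib

open MeasureTheory ProbabilityTheory intervalIntegral

/-- The 2-periodic "seesaw" (tent) function with values in `[0,1]`. -/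
noncomputable def tent (x : ℝ) : ℝ := |x - 2 * round (x / 2)|


lemma tent_eq_fract (x : ℝ) : tent x = |2 * Int.fract (x / 2 + 1 / 2) - 1| := by
  have h : (round (x / 2) : ℝ) = ⌊x / 2 + 1 / 2⌋ := by
    rw [round_eq]
  unfold tent
  rw [h]
  have : x - 2 * (⌊x / 2 + 1 / 2⌋ : ℝ) = 2 * Int.fract (x / 2 + 1 / 2) - 1 := by
    rw [Int.fract]; ring
  rw [this]

lemma measurable_tent : Measurable tent := by
  simp only [funext tent_eq_fract]
  exact (((measurable_fract.comp ((measurable_id.div_const 2).add_const _)).const_mul 2).sub_const 1).abs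

lemma tent_periodic : Function.Periodic tent 2 := by
  intro x
  simp only [tent_eq_fract]
  have : (x + 2) / 2 + 1 / 2 = (x / 2 + 1 / 2) + 1 := by ring
  rw [this, Int.fract_add_one]

lemma tent_neg (x : ℝ) : tent (-x) = tent x := by
  simp only [tent_eq_fract]
  have hx : x / 2 + 1 / 2 = -(-x / 2 + 1 / 2) + 1 := by ring
  rcases eq_or_ne (Int.fract (-x / 2 + 1 / 2)) 0 with h | h
  · rw [hx, Int.fract_add_one, Int.fract_neg_eq_zero.mpr h, h]
  · rw [hx, Int.fract_add_one, Int.fract_neg h]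
    rw [abs_sub_comm]
    congr 1
    ring

lemma tent_of_mem_Icc01 {x : ℝ} (hx : x ∈ Set.Icc (0:ℝ) 1) : tent x = x := by
  rw [tent_eq_fract]
  rcases eq_or_lt_of_le hx.2 with h | h
  · subst h
    norm_num
  · have h1 : Int.fract (x / 2 + 1 / 2) = x / 2 + 1 / 2 := by
      rw [Int.fract_eq_self]
      constructor <;> [linarith [hx.1]; linarith]
    rw [h1, abs_of_nonneg (by linarith [hx.1])]
    ring

lemma tent_of_mem_Icc12 {x : ℝ} (hx : x ∈ Set.Icc (1:ℝ) 2) : tent x = 2 - x := by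
  have := tent_of_mem_Icc01 (x := 2 - x) ⟨by linarith [hx.2], by linarith [hx.1]⟩
  have h2 : tent (2 - x) = tent x := by
    rw [show (2 - x) = -x + 2 by ring, tent_periodic (-x), tent_neg]
  rw [← h2, this]


lemma gauss_map_neg (t : NNReal) : (gaussianReal 0 t).map (fun x => -x) = gaussianReal 0 t := by
  have h := gaussianReal_map_const_mul (μ := 0) (v := t) (-1)
  have h1 : (fun x : ℝ => -x) = ((-1 : ℝ) * ·) := by funext x; ring
  have h2 : (⟨(-1:ℝ)^2, sq_nonneg _⟩ : NNReal) = 1 := by ext; norm_num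
  rw [h1, h]
  congr 1
  · norm_num
  · ext; simp

-- bounded measurable is integrable on finite measure
lemma integrable_of_bdd {α : Type*} [MeasurableSpace α] {μ : Measure α} [IsFiniteMeasure μ]
    {f : α → ℝ} (hf : AEStronglyMeasurable f μ) {C : ℝ} (h : ∀ a, |f a| ≤ C) :
    Integrable f μ :=
  ⟨hf, HasFiniteIntegral.of_bounded (C := C) (Filter.Eventually.of_forall fun a => by
    simpa [Real.norm_eq_abs] using h a)⟩

lemma intervalIntegrable_of_bdd {f : ℝ → ℝ} (hf : Measurable f) {C : ℝ}
    (h : ∀ a, |f a| ≤ C) (a b : ℝ) : IntervalIntegrable f volume a b := by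
  rw [intervalIntegrable_iff]
  exact Measure.integrableOn_of_bounded (by rw [Set.uIoc_eq_union]; exact ne_top_of_le_ne_top (by simp [measure_union_le]) (measure_union_le _ _)) hf.aestronglyMeasurable
    (Filter.Eventually.of_forall fun x => by simpa [Real.norm_eq_abs] using h x)

instance : IsProbabilityMeasure (volume.restrict (Set.Icc (0:ℝ) 1)) := by
  constructor
  simp

lemma tent_sum (g : ℝ → ℝ) (hg : Measurable g) {C : ℝ} (hb : ∀ v, |g v| ≤ C) (b : ℝ) :
    (∫ u in (0:ℝ)..1, g (tent (u + b))) + (∫ u in (0:ℝ)..1, g (tent (u + -b)))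
      = 2 * ∫ u in (0:ℝ)..1, g u := by
  have hgt : Measurable (fun w => g (tent w)) := hg.comp measurable_tent
  have hint : ∀ a c : ℝ, IntervalIntegrable (fun w => g (tent w)) volume a c :=
    intervalIntegrable_of_bdd hgt (fun a => hb _)
  have e1 : (∫ u in (0:ℝ)..1, g (tent (u + b))) = ∫ w in b..(1 + b), g (tent w) := by
    simpa using integral_comp_add_right (a := (0:ℝ)) (b := 1) (fun w => g (tent w)) b
  have e2 : (∫ u in (0:ℝ)..1, g (tent (u + -b))) = ∫ w in (b - 1)..b, g (tent w) := by
    have h1 : (∫ u in (0:ℝ)..1, g (tent (u + -b))) = ∫ w in (-b)..(1 - b), g (tent w) := by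
      simpa [sub_eq_add_neg, add_comm] using
        integral_comp_add_right (a := (0:ℝ)) (b := 1) (fun w => g (tent w)) (-b)
    have h2 : (∫ w in (-b)..(1 - b), g (tent w)) = ∫ w in (b - 1)..b, g (tent (-w)) := by
      rw [integral_comp_neg (a := b - 1) (b := b) (fun w => g (tent w))]
      norm_num
    simp only [tent_neg] at h2
    rw [h1, h2]
  rw [e1, e2]
  have e3 : (∫ w in (b-1)..b, g (tent w)) + (∫ w in b..(1+b), g (tent w))
      = ∫ w in (b-1)..(1+b), g (tent w) :=
    integral_add_adjacent_intervals (hint _ _) (hint _ _)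
  rw [add_comm, e3]
  have e4 : (∫ w in (b-1)..(1+b), g (tent w)) = ∫ w in (0:ℝ)..2, g (tent w) := by
    have hper : Function.Periodic (fun w => g (tent w)) 2 := fun w => by
      simp [tent_periodic w]
    have := hper.intervalIntegral_add_eq (b - 1) 0
    simpa [show b - 1 + 2 = 1 + b by ring] using this
  rw [e4, ← integral_add_adjacent_intervals (a := (0:ℝ)) (b := 1) (c := 2) (hint _ _) (hint _ _)]
  have e5 : (∫ w in (0:ℝ)..1, g (tent w)) = ∫ w in (0:ℝ)..1, g w := by
    apply integral_congr
    intro w hw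
    show g (tent w) = g w
    rw [tent_of_mem_Icc01 (by simpa using hw)]
  have e6 : (∫ w in (1:ℝ)..2, g (tent w)) = ∫ w in (0:ℝ)..1, g w := by
    have h1 : (∫ w in (1:ℝ)..2, g (tent w)) = ∫ w in (1:ℝ)..2, g (2 - w) := by
      apply integral_congr
      intro w hw
      show g (tent w) = g (2 - w)
      rw [tent_of_mem_Icc12 (by simpa using hw)]
    rw [h1, integral_comp_sub_left (a := (1:ℝ)) (b := 2) g 2]
    norm_num
  rw [e5, e6]
  ring

lemma key (g : ℝ → ℝ) (hg : Measurable g) {C : ℝ} (hb : ∀ v, |g v| ≤ C) (t : NNReal) :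
    (∫ q, g q.2 ∂((gaussianReal 0 t).prod (volume.restrict (Set.Icc (0:ℝ) 1))))
      = ∫ q, g (tent (q.2 + q.1)) ∂((gaussianReal 0 t).prod (volume.restrict (Set.Icc (0:ℝ) 1))) := by
  set ν := gaussianReal 0 t with hν
  set ρ := volume.restrict (Set.Icc (0:ℝ) 1) with hρ
  have hC : 0 ≤ C := le_trans (abs_nonneg _) (hb 0)
  have hmeas2 : Measurable (fun q : ℝ × ℝ => g (tent (q.2 + q.1))) :=
    hg.comp (measurable_tent.comp (measurable_snd.add measurable_fst))
  have hmeas1 : Measurable (fun q : ℝ × ℝ => g q.2) := hg.comp measurable_snd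
  -- convert restricted integrals to interval integrals
  have icc_eq : ∀ h : ℝ → ℝ, (∫ u, h u ∂ρ) = ∫ u in (0:ℝ)..1, h u := by
    intro h
    rw [hρ, MeasureTheory.integral_Icc_eq_integral_Ioc,
      intervalIntegral.integral_of_le (by norm_num : (0:ℝ) ≤ 1)]
  set K := ∫ u, g u ∂ρ with hK
  set F : ℝ → ℝ := fun b => ∫ u, g (tent (u + b)) ∂ρ with hF
  have hFsum : ∀ b, F b + F (-b) = 2 * K := by
    intro b
    rw [hF]
    simp only
    rw [icc_eq, icc_eq, hK, icc_eq]
    exact tent_sum g hg hb b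
  have hFsm : StronglyMeasurable F := by
    have : StronglyMeasurable (fun q : ℝ × ℝ => g (tent (q.2 + q.1))) :=
      hmeas2.stronglyMeasurable
    exact this.integral_prod_right'
  have hFb : ∀ b, |F b| ≤ C := by
    intro b
    rw [← Real.norm_eq_abs]
    calc ‖F b‖ ≤ C * (ρ Set.univ).toReal := by
          apply MeasureTheory.norm_integral_le_of_norm_le_const
          exact Filter.Eventually.of_forall fun u => by
            simpa [Real.norm_eq_abs] using hb _
      _ = C := by simp
  have hFint : Integrable F ν := integrable_of_bdd hFsm.aestronglyMeasurable hFb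
  have hsymm : (∫ b, F (-b) ∂ν) = ∫ b, F b ∂ν := by
    conv_rhs => rw [hν, ← gauss_map_neg t]
    rw [integral_map measurable_neg.aemeasurable hFsm.aestronglyMeasurable]
  have hmain : (∫ b, F b ∂ν) = K := by
    have h1 : (∫ b, F (-b) ∂ν) = ∫ b, (2 * K - F b) ∂ν := by
      apply MeasureTheory.integral_congr_ae
      exact Filter.Eventually.of_forall fun b => by
        show F (-b) = 2 * K - F b
        linarith [hFsum b]
    rw [h1, MeasureTheory.integral_sub (integrable_const _) hFint, MeasureTheory.integral_const] at hsymm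
    have : ν.real Set.univ = 1 := by simp [hν]
    rw [this] at hsymm
    simp at hsymm
    linarith
  rw [integral_prod _ (integrable_of_bdd hmeas1.aestronglyMeasurable (fun q => hb _)),
    integral_prod _ (integrable_of_bdd hmeas2.aestronglyMeasurable (fun q => hb _))]
  have : ∀ b : ℝ, (∫ u, g u ∂ρ) = K := fun _ => rfl
  calc (∫ _b, ∫ u, g u ∂ρ ∂ν) = ∫ _b, K ∂ν := rfl
    _ = K := by rw [MeasureTheory.integral_const]; simp [hν]
    _ = ∫ b, F b ∂ν := hmain.symm
    _ = ∫ b, ∫ u, g (tent (u + b)) ∂ρ ∂ν := rfl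

/-- Intertwining of the strip RBM `Z = X + i·tent(Y)` (with `X, Y` independent
one-dimensional Brownian motions) with one-dimensional Brownian motion, via the
kernel `Λ(x,·) = Unif([x, x+i])`: at every time `t`, for every bounded Borel `φ`,
`E[φ(X_tˣ + iU)] = E[E_{x+iU}[φ(Z_t)]]`.  Here `a` is the increment of `X`,
`b` the increment of `Y`, both `N(0,t)`, and `U` uniform on `[0,1]`, independent. -/
theorem stmt_8 (φ : ℂ → ℝ) (hφm : Measurable φ) (C : ℝ) (hφb : ∀ z, |φ z| ≤ C)
    (x : ℝ) (t : NNReal) :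
    let μ : Measure (ℝ × ℝ × ℝ) :=
      (gaussianReal 0 t).prod ((gaussianReal 0 t).prod (volume.restrict (Set.Icc 0 1)))
    ∫ p, φ ((x + p.1 : ℝ) + Complex.I * (p.2.2 : ℝ)) ∂μ
      = ∫ p, φ ((x + p.1 : ℝ) + Complex.I * (tent (p.2.2 + p.2.1) : ℝ)) ∂μ := by
  intro μ
  set ν := gaussianReal 0 t with hν
  set ρ := volume.restrict (Set.Icc (0:ℝ) 1) with hρ
  have hμ : μ = ν.prod (ν.prod ρ) := rfl
  have hm1 : Measurable (fun p : ℝ × ℝ × ℝ =>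
      φ ((x + p.1 : ℝ) + Complex.I * (p.2.2 : ℝ))) := by
    apply hφm.comp
    exact (Complex.measurable_ofReal.comp (measurable_const.add measurable_fst)).add
      ((Complex.measurable_ofReal.comp (measurable_snd.comp measurable_snd)).const_mul _)
  have hm2 : Measurable (fun p : ℝ × ℝ × ℝ =>
      φ ((x + p.1 : ℝ) + Complex.I * (tent (p.2.2 + p.2.1) : ℝ))) := by
    apply hφm.comp
    exact (Complex.measurable_ofReal.comp (measurable_const.add measurable_fst)).add
      ((Complex.measurable_ofReal.comp (measurable_tent.comp
        ((measurable_snd.comp measurable_snd).add (measurable_fst.comp measurable_snd)))).const_mul _)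
  rw [hμ, MeasureTheory.integral_prod _
      (integrable_of_bdd hm1.aestronglyMeasurable (fun p => hφb _)),
    MeasureTheory.integral_prod _
      (integrable_of_bdd hm2.aestronglyMeasurable (fun p => hφb _))]
  apply MeasureTheory.integral_congr_ae
  apply Filter.Eventually.of_forall
  intro a
  exact key (fun v => φ ((x + a : ℝ) + Complex.I * (v : ℝ)))
    (hφm.comp (measurable_const.add (Complex.measurable_ofReal.const_mul _)))
    (fun v => hφb _) t
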